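/- Let H ∈ 𝔪, let O be a Hermitian N×N matrix with iO ∈ 𝔪, and let ρ be a density matrix. Then for every g⁺, g⁻ ∈ G the number Tr(φ(g⁻) ρ φ(g⁻)⁻¹ · [H, φ(g⁺) O φ(g⁺)⁻¹]) is real, and ∫_G ∫_G ( Tr(φ(g⁻) ρ φ(g⁻)⁻¹ · [H, φ(g⁺) O φ(g⁺)⁻¹]) )² dμ(g⁺) dμ(g⁻) = ‖H‖_K² · Tr(O²) · ‖(iρ)_𝔪‖_F² / d². -/

import Mathlib

open MeasureTheory Matrix
open scoped ComplexOrder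
open scoped ComplexConjugate

set_option linter.unusedSectionVars false
set_option linter.unusedVariables false

namespace Stmt1Aux

abbrev Mx (N : ℕ) := Matrix (Fin N) (Fin N) ℂ

variable {N : ℕ}

/-- Frobenius inner product, conjugate-linear in the first argument. -/
noncomputable def ip (A B : Mx N) : ℂ := (Aᴴ * B).trace

lemma ip_conj (A B : Mx N) : conj (ip A B) = ip B A := by
  have : conj (ip A B) = ((Aᴴ * B)ᴴ).trace := by
    rw [Matrix.trace_conjTranspose]; rfl
  rw [this, Matrix.conjTranspose_mul, Matrix.conjTranspose_conjTranspose]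
  rfl

lemma ip_add_right (A B C : Mx N) : ip A (B + C) = ip A B + ip A C := by
  simp [ip, Matrix.mul_add]

lemma ip_smul_right (c : ℂ) (A B : Mx N) : ip A (c • B) = c * ip A B := by
  simp [ip, Matrix.mul_smul]

lemma ip_smul_left (c : ℂ) (A B : Mx N) : ip (c • A) B = conj c * ip A B := by
  simp [ip, Matrix.smul_mul]

lemma ip_add_left (A B C : Mx N) : ip (A + B) C = ip A C + ip B C := by
  simp [ip, Matrix.add_mul]

/-- `ip A` as a linear map in the second argument. -/
noncomputable def ipL (A : Mx N) : Mx N →ₗ[ℂ] ℂ where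
  toFun B := ip A B
  map_add' B C := ip_add_right A B C
  map_smul' c B := by simp [ip_smul_right]

@[simp] lemma ipL_apply (A B : Mx N) : ipL A B = ip A B := rfl


variable {G : Type} [Group G] [TopologicalSpace G] [IsTopologicalGroup G] [CompactSpace G]
  [MeasurableSpace G] [BorelSpace G]

lemma cont_integrable (μ : Measure G) [IsProbabilityMeasure μ] {f : G → ℂ}
    (hf : Continuous f) : Integrable f μ :=
  hf.integrable_of_hasCompactSupport (isClosed_tsupport _).isCompact

/-- Entrywise integral of a matrix-valued function. -/
noncomputable def intMat (μ : Measure G) (f : G → Mx N) : Mx N :=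
  Matrix.of fun a b => ∫ g, f g a b ∂μ

lemma intMat_apply (μ : Measure G) (f : G → Mx N) (a b : Fin N) :
    intMat μ f a b = ∫ g, f g a b ∂μ := rfl

lemma lfun_intMat (μ : Measure G) (L : Mx N →ₗ[ℂ] ℂ) (f : G → Mx N)
    (hf : ∀ a b, Integrable (fun g => f g a b) μ) :
    L (intMat μ f) = ∫ g, L (f g) ∂μ := by
  have expand : ∀ X : Mx N,
      L X = ∑ i, ∑ j, X i j * L (Matrix.single i j 1) := by
    intro X
    conv_lhs => rw [Matrix.matrix_eq_sum_single X]
    rw [map_sum]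
    refine Finset.sum_congr rfl fun i _ => ?_
    rw [map_sum]
    refine Finset.sum_congr rfl fun j _ => ?_
    rw [show Matrix.single i j (X i j) = X i j • Matrix.single i j 1 by
      rw [Matrix.smul_single, smul_eq_mul, mul_one], LinearMap.map_smul, smul_eq_mul]
  rw [expand]
  have : ∀ i j : Fin N, intMat μ f i j * L (Matrix.single i j 1)
      = ∫ g, f g i j * L (Matrix.single i j 1) ∂μ := by
    intro i j
    rw [intMat_apply, ← integral_mul_const]
  simp_rw [this]
  have e1 : ∫ g, L (f g) ∂μ = ∑ i, ∫ g, ∑ j, f g i j * L (Matrix.single i j 1) ∂μ := by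
    have hfe : (fun g => L (f g))
        = fun g => ∑ i, ∑ j, f g i j * L (Matrix.single i j 1) :=
      funext fun g => expand (f g)
    rw [hfe]
    exact integral_finset_sum _ fun i _ =>
      integrable_finset_sum _ fun j _ => (hf i j).mul_const _
  have e2 : ∀ i : Fin N, ∫ g, ∑ j, f g i j * L (Matrix.single i j 1) ∂μ
      = ∑ j, ∫ g, f g i j * L (Matrix.single i j 1) ∂μ := fun i =>
    integral_finset_sum _ fun j _ => (hf i j).mul_const _
  rw [e1]
  exact Finset.sum_congr rfl fun i _ => (e2 i).symm ▸ rfl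


/-- Matrix entry as a linear functional, composed with a linear map. -/
noncomputable def entryL (a b : Fin N) : Mx N →ₗ[ℂ] ℂ where
  toFun X := X a b
  map_add' X Y := rfl
  map_smul' c X := rfl

lemma lmap_intMat (μ : Measure G) (L : Mx N →ₗ[ℂ] Mx N) (f : G → Mx N)
    (hf : ∀ a b, Integrable (fun g => f g a b) μ) :
    L (intMat μ f) = intMat μ (fun g => L (f g)) := by
  ext a b
  have h1 : L (intMat μ f) a b = ((entryL a b).comp L) (intMat μ f) := rfl
  rw [h1, lfun_intMat μ _ _ hf]
  rfl

lemma intMat_shift (μ : Measure G) [Measure.IsMulLeftInvariant μ] (f : G → Mx N) (h : G) :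
    intMat μ (fun g => f (h * g)) = intMat μ f := by
  ext a b
  exact integral_mul_left_eq_self (fun g => f g a b) h

/-- Conjugation action of the group on matrices. -/
noncomputable def cAct (φ : G →* Matrix.unitaryGroup (Fin N) ℂ) (g : G) (A : Mx N) : Mx N :=
  (φ g : Mx N) * A * (φ g⁻¹ : Mx N)

variable (φ : G →* Matrix.unitaryGroup (Fin N) ℂ)

lemma coe_phi_inv (g : G) : (φ g⁻¹ : Mx N) = (φ g : Mx N)ᴴ := by
  rw [map_inv, Matrix.UnitaryGroup.inv_val, Matrix.star_eq_conjTranspose]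

lemma phi_mul_phi_inv (g : G) : (φ g : Mx N) * (φ g⁻¹ : Mx N) = 1 := by
  rw [map_inv, ← Matrix.UnitaryGroup.mul_val, mul_inv_cancel, Matrix.UnitaryGroup.one_val]

lemma phi_inv_mul_phi (g : G) : (φ g⁻¹ : Mx N) * (φ g : Mx N) = 1 := by
  rw [map_inv, ← Matrix.UnitaryGroup.mul_val, inv_mul_cancel, Matrix.UnitaryGroup.one_val]

lemma cAct_one (A : Mx N) : cAct φ 1 A = A := by
  simp [cAct, Matrix.UnitaryGroup.one_val]

lemma cAct_mul (g h : G) (A : Mx N) : cAct φ (g * h) A = cAct φ g (cAct φ h A) := by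
  unfold cAct
  rw [_root_.map_mul, Matrix.UnitaryGroup.mul_val, _root_.mul_inv_rev, _root_.map_mul, Matrix.UnitaryGroup.mul_val]
  noncomm_ring

lemma cAct_add (g : G) (A B : Mx N) : cAct φ g (A + B) = cAct φ g A + cAct φ g B := by
  unfold cAct; noncomm_ring

lemma cAct_smul (g : G) (c : ℂ) (A : Mx N) : cAct φ g (c • A) = c • cAct φ g A := by
  unfold cAct; rw [Matrix.mul_smul, Matrix.smul_mul]

/-- Conjugation action as a linear map. -/
noncomputable def cActL (g : G) : Mx N →ₗ[ℂ] Mx N where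
  toFun A := cAct φ g A
  map_add' A B := cAct_add φ g A B
  map_smul' c A := cAct_smul φ g c A

lemma cAct_conjTranspose (g : G) (A : Mx N) : (cAct φ g A)ᴴ = cAct φ g Aᴴ := by
  unfold cAct
  rw [Matrix.conjTranspose_mul, Matrix.conjTranspose_mul, coe_phi_inv,
    Matrix.conjTranspose_conjTranspose, Matrix.mul_assoc, ← coe_phi_inv]

lemma ip_cAct_cAct (g : G) (A B : Mx N) : ip (cAct φ g A) (cAct φ g B) = ip A B := by
  rw [ip, cAct_conjTranspose]
  unfold cAct
  have h1 : (φ g : Mx N) * Aᴴ * (φ g⁻¹ : Mx N) * ((φ g : Mx N) * B * (φ g⁻¹ : Mx N))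
      = (φ g : Mx N) * (Aᴴ * B) * (φ g⁻¹ : Mx N) := by
    simp only [Matrix.mul_assoc]
    rw [← Matrix.mul_assoc (φ g⁻¹ : Mx N) (φ g : Mx N), phi_inv_mul_phi, Matrix.one_mul]
  rw [h1, Matrix.trace_mul_comm, ← Matrix.mul_assoc, phi_inv_mul_phi, Matrix.one_mul, ip]

lemma ip_cAct_left (g : G) (A B : Mx N) : ip (cAct φ g A) B = ip A (cAct φ g⁻¹ B) := by
  have h := ip_cAct_cAct φ g A (cAct φ g⁻¹ B)
  rw [← cAct_mul, mul_inv_cancel, cAct_one] at h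
  rw [← h]

lemma ip_cAct_right (g : G) (A B : Mx N) : ip A (cAct φ g B) = ip (cAct φ g⁻¹ A) B := by
  have h := ip_cAct_cAct φ g⁻¹ A (cAct φ g B)
  rw [← cAct_mul, inv_mul_cancel, cAct_one] at h
  rw [h]

lemma cAct_continuous (hcont : Continuous fun g => (φ g : Mx N)) (A : Mx N) :
    Continuous fun g => cAct φ g A := by
  have h2 : Continuous fun g : G => (φ g⁻¹ : Mx N) := hcont.comp continuous_inv
  exact (hcont.matrix_mul continuous_const).matrix_mul h2

lemma ip_continuous {f₁ f₂ : G → Mx N} (h₁ : Continuous f₁) (h₂ : Continuous f₂) :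
    Continuous fun g => ip (f₁ g) (f₂ g) :=
  (h₁.matrix_conjTranspose.matrix_mul h₂).matrix_trace

section Basis

variable {d : ℕ} (F : Fin d → Mx N)

/-- Orthogonal projection onto the complex span of `F`. -/
noncomputable def PF (X : Mx N) : Mx N := ∑ j, ip (F j) X • F j

/-- `PF` as a linear map. -/
noncomputable def PFL : Mx N →ₗ[ℂ] Mx N where
  toFun X := PF F X
  map_add' X Y := by simp [PF, ip_add_right, add_smul, Finset.sum_add_distrib]
  map_smul' c X := by
    simp [PF, ip_smul_right, Finset.smul_sum, smul_smul]

lemma PF_mem (X : Mx N) : PF F X ∈ Submodule.span ℂ (Set.range F) :=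
  Submodule.sum_mem _ fun j _ =>
    Submodule.smul_mem _ _ (Submodule.subset_span ⟨j, rfl⟩)

variable (hF : ∀ j k, ip (F j) (F k) = if j = k then 1 else 0)
include hF

lemma PF_eq_self {Z : Mx N} (hZ : Z ∈ Submodule.span ℂ (Set.range F)) : PF F Z = Z := by
  induction hZ using Submodule.span_induction with
  | mem x hx =>
    obtain ⟨k, rfl⟩ := hx
    simp only [PF, hF]
    simp [ite_smul]
  | zero => simp [PF, ip, Matrix.mul_zero]
  | add x y _ _ hx hy =>
    have : PF F (x + y) = PF F x + PF F y := map_add (PFL F) x y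
    rw [this, hx, hy]
  | smul c x _ hx =>
    have : PF F (c • x) = c • PF F x := map_smul (PFL F) c x
    rw [this, hx]

lemma ip_PF (W X : Mx N) (hW : W ∈ Submodule.span ℂ (Set.range F)) :
    ip W (PF F X) = ip W X := by
  induction hW using Submodule.span_induction with
  | mem w hw =>
    obtain ⟨k, rfl⟩ := hw
    simp only [PF]
    rw [show ip (F k) (∑ j, ip (F j) X • F j) = ipL (F k) (∑ j, ip (F j) X • F j) from rfl,
      map_sum (ipL (F k)) _ Finset.univ]
    simp only [ipL_apply, ip_smul_right, hF]
    simp [mul_ite]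
  | zero => simp [ip, Matrix.conjTranspose_zero, Matrix.zero_mul]
  | add x y _ _ hx hy => rw [ip_add_left, ip_add_left, hx, hy]
  | smul c x _ hx => rw [ip_smul_left, ip_smul_left, hx]

lemma ip_expand (Y : Mx N) {Z : Mx N} (hZ : Z ∈ Submodule.span ℂ (Set.range F)) :
    ∑ j, ip (F j) Z * ip Y (F j) = ip Y Z := by
  conv_rhs => rw [← PF_eq_self F hF hZ]
  show _ = ip Y (PF F Z)
  simp only [PF]
  rw [show ip Y (∑ j, ip (F j) Z • F j) = ipL Y (∑ j, ip (F j) Z • F j) from rfl,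
    map_sum (ipL Y) _ Finset.univ]
  simp only [ipL_apply, ip_smul_right]

end Basis

section Schur

variable (μ : Measure G) [μ.IsHaarMeasure] [IsProbabilityMeasure μ]
variable (φ : G →* Matrix.unitaryGroup (Fin N) ℂ)

set_option maxHeartbeats 1000000 in
lemma schur_master
    (hcont : Continuous fun g => (φ g : Mx N))
    {d : ℕ} (hd : 1 ≤ d) (F : Fin d → Mx N)
    (hF : ∀ j k, ip (F j) (F k) = if j = k then 1 else 0)
    (hFV : ∀ g : G, ∀ Z ∈ Submodule.span ℂ (Set.range F),
        cAct φ g Z ∈ Submodule.span ℂ (Set.range F))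
    (hirr : ∀ W : Submodule ℂ (Mx N), W ≤ Submodule.span ℂ (Set.range F) →
      (∀ g : G, ∀ Z ∈ W, cAct φ g Z ∈ W) → W = ⊥ ∨ W = Submodule.span ℂ (Set.range F))
    (A B : Mx N) (hA : A ∈ Submodule.span ℂ (Set.range F))
    (hB : B ∈ Submodule.span ℂ (Set.range F)) (X X' : Mx N) :
    ∫ g, ip (cAct φ g B) X * ip X' (cAct φ g A) ∂μ
      = ip B A / d * ip X' (PF F X) := by
  have hcA : ∀ A₀ : Mx N, Continuous fun g => cAct φ g A₀ := cAct_continuous φ hcont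
  have hInt : ∀ (X₀ A₀ : Mx N) (a b : Fin N),
      Integrable (fun g => (ip (cAct φ g B) X₀ • cAct φ g A₀) a b) μ := by
    intro X₀ A₀ a b
    apply cont_integrable
    have h1 : Continuous fun g => ip (cAct φ g B) X₀ :=
      ip_continuous (hcA B) continuous_const
    have h2 : Continuous fun g => cAct φ g A₀ a b := (hcA A₀).matrix_elem a b
    simpa [Matrix.smul_apply, smul_eq_mul] using
      (show Continuous fun g => ip (cAct φ g B) X₀ * cAct φ g A₀ a b from h1.mul h2)
  set f : Mx N → G → Mx N := fun X₀ g => ip (cAct φ g B) X₀ • cAct φ g A with hf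
  have Tadd : ∀ X₁ X₂ : Mx N, intMat μ (f (X₁ + X₂)) = intMat μ (f X₁) + intMat μ (f X₂) := by
    intro X₁ X₂
    ext a b
    rw [Matrix.add_apply, intMat_apply, intMat_apply, intMat_apply,
      ← integral_add (hInt X₁ A a b) (hInt X₂ A a b)]
    congr 1; funext g
    simp only [hf, ip_add_right, add_smul, Matrix.add_apply]
  have Tsmul : ∀ (cc : ℂ) (X₀ : Mx N), intMat μ (f (cc • X₀)) = cc • intMat μ (f X₀) := by
    intro cc X₀
    ext a b
    rw [Matrix.smul_apply, intMat_apply, intMat_apply, smul_eq_mul, ← integral_const_mul]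
    congr 1; funext g
    simp only [hf, ip_smul_right, Matrix.smul_apply, smul_eq_mul, mul_assoc]
  set T : Mx N →ₗ[ℂ] Mx N :=
    { toFun := fun X₀ => intMat μ (f X₀)
      map_add' := Tadd
      map_smul' := Tsmul } with hT
  have hTdef : ∀ X₀ : Mx N, T X₀ = intMat μ (f X₀) := fun _ => rfl
  have hTPF : ∀ X₀ : Mx N, T X₀ = T (PF F X₀) := by
    intro X₀
    rw [hTdef, hTdef]
    have : f X₀ = f (PF F X₀) := by
      funext g
      simp only [hf]
      rw [ip_PF F hF _ X₀ (hFV g B hB)]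
    rw [this]
  have hTV : ∀ X₀ : Mx N, T X₀ ∈ Submodule.span ℂ (Set.range F) := by
    intro X₀
    have hfix : PFL F (T X₀) = T X₀ := by
      rw [hTdef, lmap_intMat μ (PFL F) _ (hInt X₀ A)]
      have : (fun g => PFL F (f X₀ g)) = f X₀ := by
        funext g
        show PF F (ip (cAct φ g B) X₀ • cAct φ g A) = _
        rw [show PF F (ip (cAct φ g B) X₀ • cAct φ g A)
            = ip (cAct φ g B) X₀ • PF F (cAct φ g A) from map_smul (PFL F) _ _,
          PF_eq_self F hF (hFV g A hA)]
      rw [this]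
    rw [← hfix]
    exact PF_mem F _
  have hTequiv : ∀ (h : G) (X₀ : Mx N), T (cAct φ h X₀) = cAct φ h (T X₀) := by
    intro h X₀
    have hkey : ∀ g : G, ip (cAct φ g B) (cAct φ h X₀) = ip (cAct φ (h⁻¹ * g) B) X₀ := by
      intro g
      rw [ip_cAct_right φ h, ← cAct_mul]
    have hrhs : cAct φ h (T X₀)
        = intMat μ (fun g => ip (cAct φ g B) X₀ • cAct φ (h * g) A) := by
      rw [hTdef, show cAct φ h (intMat μ (f X₀))
          = cActL φ h (intMat μ (f X₀)) from rfl,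
        lmap_intMat μ (cActL φ h) _ (hInt X₀ A)]
      have : (fun g => cActL φ h (f X₀ g))
          = fun g => ip (cAct φ g B) X₀ • cAct φ (h * g) A := by
        funext g
        show cAct φ h (ip (cAct φ g B) X₀ • cAct φ g A) = _
        rw [cAct_smul, ← cAct_mul]
      rw [this]
    rw [hrhs, hTdef]
    have e1 : f (cAct φ h X₀) = fun g => ip (cAct φ (h⁻¹ * g) B) X₀ • cAct φ g A := by
      funext g
      simp only [hf]
      rw [hkey]
    have e2 : (fun g => ip (cAct φ (h⁻¹ * (h * g)) B) X₀ • cAct φ (h * g) A)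
        = fun g => ip (cAct φ g B) X₀ • cAct φ (h * g) A := by
      funext g
      rw [inv_mul_cancel_left]
    calc intMat μ (f (cAct φ h X₀))
        = intMat μ (fun g => ip (cAct φ (h⁻¹ * g) B) X₀ • cAct φ g A) := by rw [e1]
      _ = intMat μ (fun g => ip (cAct φ (h⁻¹ * (h * g)) B) X₀ • cAct φ (h * g) A) :=
          (intMat_shift μ (fun g => ip (cAct φ (h⁻¹ * g) B) X₀ • cAct φ g A) h).symm
      _ = intMat μ (fun g => ip (cAct φ g B) X₀ • cAct φ (h * g) A) := by rw [e2]
  -- Schur's lemma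
  haveI : Nontrivial ↥(Submodule.span ℂ (Set.range F)) := by
    refine ⟨⟨F ⟨0, hd⟩, Submodule.subset_span ⟨_, rfl⟩⟩, 0, ?_⟩
    intro hc
    have h0 : F ⟨0, hd⟩ = 0 := by simpa using congrArg Subtype.val hc
    have h1 := hF ⟨0, hd⟩ ⟨0, hd⟩
    rw [h0, if_pos rfl] at h1
    simp [ip] at h1
  obtain ⟨c, hc⟩ := Module.End.exists_eigenvalue
    (T.restrict (p := Submodule.span ℂ (Set.range F)) (q := Submodule.span ℂ (Set.range F))
      (fun x _ => hTV x))
  obtain ⟨v₀, hv₀⟩ := hc.exists_hasEigenvector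
  set W : Submodule ℂ (Mx N) :=
    { carrier := {Z | Z ∈ Submodule.span ℂ (Set.range F) ∧ T Z = c • Z}
      add_mem' := by
        rintro x y ⟨hx1, hx2⟩ ⟨hy1, hy2⟩
        exact ⟨Submodule.add_mem _ hx1 hy1, by rw [map_add, hx2, hy2, smul_add]⟩
      zero_mem' := ⟨Submodule.zero_mem _, by rw [map_zero, smul_zero]⟩
      smul_mem' := by
        rintro a x ⟨hx1, hx2⟩
        exact ⟨Submodule.smul_mem _ a hx1, by rw [LinearMap.map_smul, hx2, smul_comm]⟩ } with hW
  have hWle : W ≤ Submodule.span ℂ (Set.range F) := fun x hx => hx.1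
  have hWinv : ∀ g : G, ∀ Z ∈ W, cAct φ g Z ∈ W := by
    intro g Z hZ
    exact ⟨hFV g Z hZ.1, by rw [hTequiv, hZ.2, cAct_smul]⟩
  have hv₀W : (v₀ : Mx N) ∈ W := by
    refine ⟨v₀.2, ?_⟩
    have h1 := hv₀.apply_eq_smul
    have h2 := congrArg Subtype.val h1
    rw [LinearMap.restrict_coe_apply] at h2
    exact h2
  have hWne : W ≠ ⊥ := by
    intro hbot
    rw [hbot] at hv₀W
    exact hv₀.2 (Subtype.ext (by simpa using hv₀W))
  have hWV : W = Submodule.span ℂ (Set.range F) := (hirr W hWle hWinv).resolve_left hWne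
  have hTc : ∀ Z ∈ Submodule.span ℂ (Set.range F), T Z = c • Z := by
    intro Z hZ
    rw [← hWV] at hZ
    exact hZ.2
  -- compute the eigenvalue
  have hd0 : (d : ℂ) ≠ 0 := Nat.cast_ne_zero.mpr (by omega)
  have hsum1 : ∑ j, ip (F j) (T (F j)) = (d : ℂ) * c := by
    have : ∀ j, ip (F j) (T (F j)) = c := by
      intro j
      rw [hTc (F j) (Submodule.subset_span ⟨j, rfl⟩), ip_smul_right, hF, if_pos rfl, mul_one]
    simp [this, Finset.sum_const, Finset.card_univ, mul_comm]
  have hsum2 : ∑ j, ip (F j) (T (F j)) = ip B A := by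
    have h2 : ∀ j, ip (F j) (T (F j))
        = ∫ g, ip (cAct φ g B) (F j) * ip (F j) (cAct φ g A) ∂μ := by
      intro j
      rw [show ip (F j) (T (F j)) = ipL (F j) (intMat μ (f (F j))) from rfl,
        lfun_intMat μ _ _ (hInt (F j) A)]
      congr 1; funext g
      simp only [hf, ipL_apply, ip_smul_right]
    have h3 : ∀ g : G, ∑ j, ip (cAct φ g B) (F j) * ip (F j) (cAct φ g A) = ip B A := by
      intro g
      have he := ip_expand F hF (cAct φ g B) (hFV g A hA)
      calc ∑ j, ip (cAct φ g B) (F j) * ip (F j) (cAct φ g A)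
          = ∑ j, ip (F j) (cAct φ g A) * ip (cAct φ g B) (F j) := by
            exact Finset.sum_congr rfl fun j _ => mul_comm _ _
        _ = ip (cAct φ g B) (cAct φ g A) := he
        _ = ip B A := ip_cAct_cAct φ g B A
    simp_rw [h2]
    rw [← integral_finset_sum]
    · simp_rw [h3]
      simp
    · intro j _
      exact cont_integrable μ
        ((ip_continuous (hcA B) continuous_const).mul
          (ip_continuous continuous_const (hcA A)))
  have hcval : c = ip B A / d := by
    rw [eq_div_iff hd0, mul_comm, ← hsum1, hsum2]
  -- conclude
  have hfinal : ip X' (T X) = ip B A / d * ip X' (PF F X) := by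
    rw [hTPF X, hTc (PF F X) (PF_mem F X), ip_smul_right, hcval]
  rw [← hfinal, show ip X' (T X) = ipL X' (intMat μ (f X)) from rfl,
    lfun_intMat μ _ _ (hInt X A)]
  congr 1; funext g
  simp only [hf, ipL_apply, ip_smul_right]

end Schur

section TraceHelpers

lemma conj_trace (M : Mx N) : conj M.trace = Mᴴ.trace := by
  rw [Matrix.trace_conjTranspose]; rfl

lemma rot2 (X R H : Mx N) :
    Matrix.trace (X * (R * H - H * R)) = Matrix.trace ((H * X - X * H) * R) := by
  rw [Matrix.mul_sub, Matrix.sub_mul, Matrix.trace_sub, Matrix.trace_sub,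
    ← Matrix.mul_assoc X R H, Matrix.trace_mul_comm (X * R) H, ← Matrix.mul_assoc,
    ← Matrix.mul_assoc X H R]

lemma trace_real_of_skew {X Y : Mx N} (hX : Xᴴ = -X) (hY : Yᴴ = -Y) :
    conj (Matrix.trace (X * Y)) = Matrix.trace (X * Y) := by
  rw [conj_trace, Matrix.conjTranspose_mul, hX, hY, Matrix.neg_mul, Matrix.mul_neg,
    neg_neg, Matrix.trace_mul_comm]

lemma ip_PF_expand {d : ℕ} (F : Fin d → Mx N) (Y X : Mx N) :
    ip Y (PF F X) = ∑ j, ip (F j) X * ip Y (F j) := by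
  show ipL Y (PF F X) = _
  rw [PF, map_sum (ipL Y) _ Finset.univ]
  simp only [ipL_apply, ip_smul_right]

lemma rot3 (P H Q : Mx N) :
    Matrix.trace (P * (H * Q - Q * H)) = Matrix.trace ((P * H - H * P) * Q) := by
  rw [Matrix.mul_sub, Matrix.sub_mul, Matrix.trace_sub, Matrix.trace_sub,
    ← Matrix.mul_assoc P H Q, ← Matrix.mul_assoc P Q H, Matrix.trace_mul_comm (P * Q) H,
    ← Matrix.mul_assoc H P Q]

end TraceHelpers

end Stmt1Aux

open Stmt1Aux

/-- simple-group variance. Under the LASA hypotheses (Frobenius-orthonormal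
skew-Hermitian family `F` spanning a conjugation-invariant Lie algebra `𝔪` with irreducible
complexified adjoint action), for `H ∈ 𝔪`, Hermitian `O` with `iO ∈ 𝔪`, and a density matrix
`ρ`, the abstracted gradient `Tr(φ(g⁻) ρ φ(g⁻)⁻¹ [H, φ(g⁺) O φ(g⁺)⁻¹])` is real for all
`g⁺, g⁻`, and its second Haar moment equals `‖H‖_K² · Tr(O²) · ‖(iρ)_𝔪‖_F² / d²`. -/
theorem stmt_1
    {G : Type} [Group G] [TopologicalSpace G] [IsTopologicalGroup G] [CompactSpace G]
    [MeasurableSpace G] [BorelSpace G]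
    (μ : Measure G) [μ.IsHaarMeasure] [IsProbabilityMeasure μ]
    {N d : ℕ} (hN : 1 ≤ N) (hd : 1 ≤ d)
    (φ : G →* Matrix.unitaryGroup (Fin N) ℂ)
    (hcont : Continuous fun g => (φ g : Matrix (Fin N) (Fin N) ℂ))
    (F : Fin d → Matrix (Fin N) (Fin N) ℂ)
    (hskew : ∀ j, (F j)ᴴ = -(F j))
    (horth : ∀ j k, Matrix.trace (F j * F k) = if j = k then (-1 : ℂ) else 0)
    (hLie : ∀ X ∈ Submodule.span ℝ (Set.range F), ∀ Y ∈ Submodule.span ℝ (Set.range F),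
      ⁅X, Y⁆ ∈ Submodule.span ℝ (Set.range F))
    (hconj : ∀ g : G, ∀ X ∈ Submodule.span ℝ (Set.range F),
      (φ g : Matrix (Fin N) (Fin N) ℂ) * X * (φ g⁻¹ : Matrix (Fin N) (Fin N) ℂ) ∈
        Submodule.span ℝ (Set.range F))
    (hirr : ∀ W : Submodule ℂ (Matrix (Fin N) (Fin N) ℂ),
      W ≤ Submodule.span ℂ (Set.range F) →
      (∀ g : G, ∀ X ∈ W,
        (φ g : Matrix (Fin N) (Fin N) ℂ) * X * (φ g⁻¹ : Matrix (Fin N) (Fin N) ℂ) ∈ W) →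
      W = ⊥ ∨ W = Submodule.span ℂ (Set.range F))
    (H : Matrix (Fin N) (Fin N) ℂ) (hH : H ∈ Submodule.span ℝ (Set.range F))
    (O : Matrix (Fin N) (Fin N) ℂ) (hO : Oᴴ = O)
    (hiO : Complex.I • O ∈ Submodule.span ℝ (Set.range F))
    (ρ : Matrix (Fin N) (Fin N) ℂ) (hρ : ρ.PosSemidef) (hρtr : ρ.trace = 1) :
    (∀ gp gm : G,
      (Matrix.trace ((φ gm : Matrix (Fin N) (Fin N) ℂ) * ρ * (φ gm⁻¹ : Matrix (Fin N) (Fin N) ℂ) *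
        ⁅H, (φ gp : Matrix (Fin N) (Fin N) ℂ) * O * (φ gp⁻¹ : Matrix (Fin N) (Fin N) ℂ)⁆)).im = 0)
    ∧
    (∫ gm, ∫ gp,
        ((Matrix.trace ((φ gm : Matrix (Fin N) (Fin N) ℂ) * ρ *
            (φ gm⁻¹ : Matrix (Fin N) (Fin N) ℂ) *
          ⁅H, (φ gp : Matrix (Fin N) (Fin N) ℂ) * O *
            (φ gp⁻¹ : Matrix (Fin N) (Fin N) ℂ)⁆)).re) ^ 2 ∂μ ∂μ)
      = (∑ j, ∑ k, ((Matrix.trace (⁅H, F k⁆ * F j)).re) ^ 2) *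
          (Matrix.trace (O * O)).re *
          (∑ j, ((Matrix.trace ((Complex.I • ρ) * F j)).re) ^ 2) / (d : ℝ) ^ 2 := by
  classical
  -- basic facts about the real and complex spans
  have hsub : ∀ X ∈ Submodule.span ℝ (Set.range F), X ∈ Submodule.span ℂ (Set.range F) := by
    intro X hX
    have hle : Submodule.span ℝ (Set.range F) ≤
        (Submodule.span ℂ (Set.range F)).restrictScalars ℝ :=
      Submodule.span_le.2 fun x hx => Submodule.subset_span hx
    exact hle hX
  have hskewV : ∀ X ∈ Submodule.span ℝ (Set.range F), Xᴴ = -X := by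
    intro X hX
    induction hX using Submodule.span_induction with
    | mem x hx => obtain ⟨j, rfl⟩ := hx; exact hskew j
    | zero => simp
    | add x y _ _ hx hy => rw [Matrix.conjTranspose_add, hx, hy, neg_add]
    | smul r x _ hx =>
      have h1 : (r • x)ᴴ = r • xᴴ := by
        ext a b
        simp [Matrix.conjTranspose_apply, Matrix.smul_apply, star_smul]
      rw [h1, hx, smul_neg]
  have hF : ∀ j k, ip (F j) (F k) = if j = k then 1 else 0 := by
    intro j k
    rw [ip, hskew j, Matrix.neg_mul, Matrix.trace_neg, horth j k]
    split <;> simp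
  have hcA : ∀ A₀ : Mx N, Continuous fun g => cAct φ g A₀ := cAct_continuous φ hcont
  have hFV : ∀ g : G, ∀ Z ∈ Submodule.span ℂ (Set.range F),
      cAct φ g Z ∈ Submodule.span ℂ (Set.range F) := by
    intro g Z hZ
    induction hZ using Submodule.span_induction with
    | mem x hx => exact hsub _ (hconj g x (Submodule.subset_span hx))
    | zero =>
      rw [show cAct φ g 0 = 0 from map_zero (cActL φ g)]
      exact Submodule.zero_mem _
    | add x y _ _ hx hy => rw [cAct_add]; exact Submodule.add_mem _ hx hy
    | smul c x _ hx => rw [cAct_smul]; exact Submodule.smul_mem _ c hx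
  have hirr' : ∀ W : Submodule ℂ (Mx N), W ≤ Submodule.span ℂ (Set.range F) →
      (∀ g : G, ∀ Z ∈ W, cAct φ g Z ∈ W) → W = ⊥ ∨ W = Submodule.span ℂ (Set.range F) :=
    fun W h1 h2 => hirr W h1 h2
  -- the main players
  have hHs : Hᴴ = -H := hskewV H hH
  have hρH : ρᴴ = ρ := hρ.1
  have hOV : O ∈ Submodule.span ℂ (Set.range F) := by
    have h1 : Complex.I • O ∈ Submodule.span ℂ (Set.range F) := hsub _ hiO
    have h2 := Submodule.smul_mem (Submodule.span ℂ (Set.range F)) (-Complex.I) h1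
    rwa [smul_smul, neg_mul, Complex.I_mul_I, neg_neg, one_smul] at h2
  have hX₀s : (Complex.I • ρ)ᴴ = -(Complex.I • ρ) := by
    rw [Matrix.conjTranspose_smul, hρH, Complex.star_def, Complex.conj_I, neg_smul]
  have hAm : ∀ j, ⁅H, F j⁆ ∈ Submodule.span ℝ (Set.range F) :=
    fun j => hLie H hH (F j) (Submodule.subset_span ⟨j, rfl⟩)
  have hAV : ∀ j, ⁅H, F j⁆ ∈ Submodule.span ℂ (Set.range F) := fun j => hsub _ (hAm j)
  have hAs : ∀ j, (⁅H, F j⁆)ᴴ = -⁅H, F j⁆ := fun j => hskewV _ (hAm j)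
  -- hermiticity facts
  have hρ'H : ∀ gm : G, (cAct φ gm ρ)ᴴ = cAct φ gm ρ := by
    intro gm; rw [cAct_conjTranspose, hρH]
  have hQH : ∀ gp : G, (cAct φ gp O)ᴴ = cAct φ gp O := by
    intro gp; rw [cAct_conjTranspose, hO]
  have hLH : ∀ gp : G, (⁅H, cAct φ gp O⁆)ᴴ = ⁅H, cAct φ gp O⁆ := by
    intro gp
    rw [Ring.lie_def, Matrix.conjTranspose_sub, Matrix.conjTranspose_mul,
      Matrix.conjTranspose_mul, hQH, hHs]
    noncomm_ring
  -- reality of the abstracted gradient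
  have hreal : ∀ gp gm : G,
      conj (Matrix.trace (cAct φ gm ρ * ⁅H, cAct φ gp O⁆))
        = Matrix.trace (cAct φ gm ρ * ⁅H, cAct φ gp O⁆) := by
    intro gp gm
    rw [conj_trace, Matrix.conjTranspose_mul, hLH, hρ'H, Matrix.trace_mul_comm]
  have hCmH : ∀ gm : G, (cAct φ gm ρ * H - H * cAct φ gm ρ)ᴴ
      = cAct φ gm ρ * H - H * cAct φ gm ρ := by
    intro gm
    rw [Matrix.conjTranspose_sub, Matrix.conjTranspose_mul, Matrix.conjTranspose_mul,
      hρ'H, hHs]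
    noncomm_ring
  have hzip : ∀ gp gm : G, Matrix.trace (cAct φ gm ρ * ⁅H, cAct φ gp O⁆)
      = ip (cAct φ gm ρ * H - H * cAct φ gm ρ) (cAct φ gp O) := by
    intro gp gm
    rw [ip, hCmH, Ring.lie_def, rot3]
  have hz2 : ∀ gp gm : G, (Matrix.trace (cAct φ gm ρ * ⁅H, cAct φ gp O⁆)) ^ 2
      = ip (cAct φ gp O) (cAct φ gm ρ * H - H * cAct φ gm ρ)
        * ip (cAct φ gm ρ * H - H * cAct φ gm ρ) (cAct φ gp O) := by
    intro gp gm
    have h1 : ip (cAct φ gp O) (cAct φ gm ρ * H - H * cAct φ gm ρ)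
        = conj (Matrix.trace (cAct φ gm ρ * ⁅H, cAct φ gp O⁆)) := by
      rw [hzip gp gm, ip_conj]
    rw [pow_two]
    nth_rewrite 1 [← hreal gp gm]
    rw [h1, hzip]
  refine ⟨fun gp gm => Complex.conj_eq_iff_im.mp (hreal gp gm), ?_⟩
  -- continuity of the gradient
  have hzc : ∀ gm : G,
      Continuous fun gp => Matrix.trace (cAct φ gm ρ * ⁅H, cAct φ gp O⁆) := by
    intro gm
    simp only [Ring.lie_def]
    exact (continuous_const.matrix_mul
      ((continuous_const.matrix_mul (hcA O)).sub
        ((hcA O).matrix_mul continuous_const))).matrix_trace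
  -- inner (g⁺) integral via Schur orthogonality
  have hinner : ∀ gm : G,
      ∫ gp, ((Matrix.trace (cAct φ gm ρ * ⁅H, cAct φ gp O⁆)).re) ^ 2 ∂μ
        = (ip O O / d * ip (cAct φ gm ρ * H - H * cAct φ gm ρ)
            (PF F (cAct φ gm ρ * H - H * cAct φ gm ρ))).re := by
    intro gm
    have h1 : ∀ gp : G, ((Matrix.trace (cAct φ gm ρ * ⁅H, cAct φ gp O⁆)).re) ^ 2
        = ((Matrix.trace (cAct φ gm ρ * ⁅H, cAct φ gp O⁆)) ^ 2).re := by
      intro gp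
      have him : (Matrix.trace (cAct φ gm ρ * ⁅H, cAct φ gp O⁆)).im = 0 :=
        Complex.conj_eq_iff_im.mp (hreal gp gm)
      rw [pow_two, pow_two, Complex.mul_re, him]
      ring
    calc ∫ gp, ((Matrix.trace (cAct φ gm ρ * ⁅H, cAct φ gp O⁆)).re) ^ 2 ∂μ
        = ∫ gp, ((Matrix.trace (cAct φ gm ρ * ⁅H, cAct φ gp O⁆)) ^ 2).re ∂μ := by
          simp_rw [h1]
      _ = (∫ gp, (Matrix.trace (cAct φ gm ρ * ⁅H, cAct φ gp O⁆)) ^ 2 ∂μ).re := by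
          have hint : Integrable (fun gp => (Matrix.trace (cAct φ gm ρ * ⁅H, cAct φ gp O⁆)) ^ 2) μ :=
            cont_integrable μ ((hzc gm).pow 2)
          simpa using integral_re hint
      _ = (ip O O / d * ip (cAct φ gm ρ * H - H * cAct φ gm ρ)
            (PF F (cAct φ gm ρ * H - H * cAct φ gm ρ))).re := by
          congr 1
          have hs := schur_master μ φ hcont hd F hF hFV hirr' O O hOV hOV
            (cAct φ gm ρ * H - H * cAct φ gm ρ) (cAct φ gm ρ * H - H * cAct φ gm ρ)
          rw [← hs]
          congr 1
          funext gp
          rw [hz2]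
  -- key per-`j` identity relating the two Schur applications
  have key : ∀ w cw : ℂ, -Complex.I * w * (Complex.I * cw) = cw * w := by
    intro w cw
    rw [show -Complex.I * w * (Complex.I * cw)
        = -(Complex.I * Complex.I) * (w * cw) by ring, Complex.I_mul_I]
    ring
  have hterm : ∀ (gm : G) (j : Fin d),
      ip (F j) (cAct φ gm ρ * H - H * cAct φ gm ρ)
        * ip (cAct φ gm ρ * H - H * cAct φ gm ρ) (F j)
      = ip (cAct φ gm (PF F (Complex.I • ρ))) ⁅H, F j⁆
        * ip ⁅H, F j⁆ (cAct φ gm (PF F (Complex.I • ρ))) := by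
    intro gm j
    have ha : ip (F j) (cAct φ gm ρ * H - H * cAct φ gm ρ)
        = -Complex.I * ip ⁅H, F j⁆ (cAct φ gm (Complex.I • ρ)) := by
      rw [cAct_smul, ip_smul_right, ip, ip, hskew j, hAs j, Matrix.neg_mul, Matrix.neg_mul,
        Matrix.trace_neg, Matrix.trace_neg, rot2, Ring.lie_def]
      rw [show -Complex.I * (Complex.I * -Matrix.trace ((H * F j - F j * H) * cAct φ gm ρ))
          = Complex.I * Complex.I * Matrix.trace ((H * F j - F j * H) * cAct φ gm ρ) by ring,
        Complex.I_mul_I]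
      ring
    have hb : ip ⁅H, F j⁆ (cAct φ gm (Complex.I • ρ))
        = ip ⁅H, F j⁆ (cAct φ gm (PF F (Complex.I • ρ))) := by
      rw [ip_cAct_right φ gm, ip_cAct_right φ gm]
      exact (ip_PF F hF _ (Complex.I • ρ) (hFV gm⁻¹ _ (hAV j))).symm
    have hc1 : ip (cAct φ gm ρ * H - H * cAct φ gm ρ) (F j)
        = conj (ip (F j) (cAct φ gm ρ * H - H * cAct φ gm ρ)) := (ip_conj _ _).symm
    rw [hc1, ha, hb, _root_.map_mul, _root_.map_neg, Complex.conj_I, neg_neg, ip_conj]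
    exact key _ _
  have hY₀V : PF F (Complex.I • ρ) ∈ Submodule.span ℂ (Set.range F) := PF_mem F _
  have hcY : Continuous fun gm => cAct φ gm (PF F (Complex.I • ρ)) := hcA _
  have hu : ∀ gm : G,
      ip (cAct φ gm ρ * H - H * cAct φ gm ρ) (PF F (cAct φ gm ρ * H - H * cAct φ gm ρ))
      = ∑ j, ip (cAct φ gm (PF F (Complex.I • ρ))) ⁅H, F j⁆
          * ip ⁅H, F j⁆ (cAct φ gm (PF F (Complex.I • ρ))) := by
    intro gm
    rw [ip_PF_expand]
    exact Finset.sum_congr rfl fun j _ => hterm gm j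
  -- real-value identifications
  have hOr : ip O O = ((Matrix.trace (O * O)).re : ℂ) := by
    have h1 : ip O O = Matrix.trace (O * O) := by rw [ip, hO]
    have h2 : conj (Matrix.trace (O * O)) = Matrix.trace (O * O) := by
      rw [conj_trace, Matrix.conjTranspose_mul, hO]
    rw [h1]
    exact (Complex.conj_eq_iff_re.mp h2).symm
  have hAr : ∀ j, ip ⁅H, F j⁆ ⁅H, F j⁆
      = ((∑ k, ((Matrix.trace (⁅H, F j⁆ * F k)).re) ^ 2 : ℝ) : ℂ) := by
    intro j
    rw [← ip_PF F hF ⁅H, F j⁆ ⁅H, F j⁆ (hAV j), ip_PF_expand]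
    push_cast
    refine Finset.sum_congr rfl fun k _ => ?_
    have ht : conj (Matrix.trace (⁅H, F j⁆ * F k)) = Matrix.trace (⁅H, F j⁆ * F k) :=
      trace_real_of_skew (hAs j) (hskew k)
    have htre : ((Matrix.trace (⁅H, F j⁆ * F k)).re : ℂ) = Matrix.trace (⁅H, F j⁆ * F k) :=
      Complex.conj_eq_iff_re.mp ht
    have h1 : ip (F k) ⁅H, F j⁆ = -Matrix.trace (⁅H, F j⁆ * F k) := by
      rw [ip, hskew k, Matrix.neg_mul, Matrix.trace_neg, Matrix.trace_mul_comm]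
    have h2 : ip ⁅H, F j⁆ (F k) = -Matrix.trace (⁅H, F j⁆ * F k) := by
      rw [ip, hAs j, Matrix.neg_mul, Matrix.trace_neg]
    rw [h1, h2, ← htre]
    simp only [Complex.ofReal_re]
    ring
  have hYr : ip (PF F (Complex.I • ρ)) (PF F (Complex.I • ρ))
      = ((∑ j, ((Matrix.trace ((Complex.I • ρ) * F j)).re) ^ 2 : ℝ) : ℂ) := by
    conv_lhs => rw [ip_PF_expand]
    push_cast
    refine Finset.sum_congr rfl fun j _ => ?_
    have ht : conj (Matrix.trace ((Complex.I • ρ) * F j)) = Matrix.trace ((Complex.I • ρ) * F j) :=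
      trace_real_of_skew hX₀s (hskew j)
    have htre : ((Matrix.trace ((Complex.I • ρ) * F j)).re : ℂ)
        = Matrix.trace ((Complex.I • ρ) * F j) := Complex.conj_eq_iff_re.mp ht
    have h1 : ip (F j) (Complex.I • ρ) = -Matrix.trace ((Complex.I • ρ) * F j) := by
      rw [ip, hskew j, Matrix.neg_mul, Matrix.trace_neg, Matrix.trace_mul_comm]
    have h2 : ip (PF F (Complex.I • ρ)) (F j)
        = conj (ip (F j) (PF F (Complex.I • ρ))) := (ip_conj _ _).symm
    rw [h2, ip_PF F hF (F j) _ (Submodule.subset_span ⟨j, rfl⟩), h1, ← htre, _root_.map_neg,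
      Complex.conj_ofReal]
    simp only [Complex.ofReal_re]
    ring
  -- assemble the outer integral
  have hgoal : (∫ gm, ∫ gp,
        ((Matrix.trace (cAct φ gm ρ * ⁅H, cAct φ gp O⁆)).re) ^ 2 ∂μ ∂μ)
      = (∑ j, ∑ k, ((Matrix.trace (⁅H, F k⁆ * F j)).re) ^ 2) *
          (Matrix.trace (O * O)).re *
          (∑ j, ((Matrix.trace ((Complex.I • ρ) * F j)).re) ^ 2) / (d : ℝ) ^ 2 := by
    simp only [hinner, hu]
    have hintu : Integrable (fun gm =>
        ip O O / (d : ℂ) * ∑ j, ip (cAct φ gm (PF F (Complex.I • ρ))) ⁅H, F j⁆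
          * ip ⁅H, F j⁆ (cAct φ gm (PF F (Complex.I • ρ)))) μ := by
      apply cont_integrable
      exact continuous_const.mul (continuous_finset_sum _ fun j _ =>
        (ip_continuous hcY continuous_const).mul (ip_continuous continuous_const hcY))
    rw [show (∫ gm, (ip O O / (d : ℂ) * ∑ j, ip (cAct φ gm (PF F (Complex.I • ρ))) ⁅H, F j⁆
          * ip ⁅H, F j⁆ (cAct φ gm (PF F (Complex.I • ρ)))).re ∂μ)
        = (∫ gm, ip O O / (d : ℂ) * ∑ j, ip (cAct φ gm (PF F (Complex.I • ρ))) ⁅H, F j⁆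
          * ip ⁅H, F j⁆ (cAct φ gm (PF F (Complex.I • ρ))) ∂μ).re by
        simpa using integral_re hintu]
    rw [integral_const_mul]
    rw [integral_finset_sum _ (fun j _ => cont_integrable μ
      (show Continuous fun gm => ip (cAct φ gm (PF F (Complex.I • ρ))) ⁅H, F j⁆
        * ip ⁅H, F j⁆ (cAct φ gm (PF F (Complex.I • ρ))) from
      ((ip_continuous hcY continuous_const).mul (ip_continuous continuous_const hcY))))]
    have hsch : ∀ j : Fin d, (∫ gm, ip (cAct φ gm (PF F (Complex.I • ρ))) ⁅H, F j⁆
        * ip ⁅H, F j⁆ (cAct φ gm (PF F (Complex.I • ρ))) ∂μ)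
        = ip (PF F (Complex.I • ρ)) (PF F (Complex.I • ρ)) / d * ip ⁅H, F j⁆ ⁅H, F j⁆ := by
      intro j
      have hs := schur_master μ φ hcont hd F hF hFV hirr'
        (PF F (Complex.I • ρ)) (PF F (Complex.I • ρ)) hY₀V hY₀V ⁅H, F j⁆ ⁅H, F j⁆
      rw [hs, PF_eq_self F hF (hAV j)]
    simp_rw [hsch, hYr, hOr, hAr]
    rw [show ((((O * O).trace.re : ℝ) : ℂ) / (d : ℂ)
          * ∑ j, (((∑ k, (((Complex.I • ρ) * F k).trace.re) ^ 2 : ℝ) : ℂ) / (d : ℂ)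
            * ((∑ k, ((⁅H, F j⁆ * F k).trace.re) ^ 2 : ℝ) : ℂ)))
        = ((((O * O).trace.re / (d : ℝ)
          * ∑ j, ((∑ k, (((Complex.I • ρ) * F k).trace.re) ^ 2) / (d : ℝ)
            * (∑ k, ((⁅H, F j⁆ * F k).trace.re) ^ 2)) : ℝ)) : ℂ) by push_cast; ring,
      Complex.ofReal_re]
    rw [show (∑ j, ∑ k, ((Matrix.trace (⁅H, F k⁆ * F j)).re) ^ 2 : ℝ)
        = ∑ j, ∑ k, ((Matrix.trace (⁅H, F j⁆ * F k)).re) ^ 2 from Finset.sum_comm]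
    rw [← Finset.mul_sum]
    ring
  exact hgoal
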